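/- arXiv:0707.0093 — 4 statements merged into one kernel-verified Lean document; each statement's English description precedes it below -/
import Mathlib

section
/- If there is a balanced stack composed of n blocks of length 1 and weight 1 that achieves an overhang of d, then there is a sequence of at most n−1 lossy moves that transforms a distribution μ with M_0[μ] = μ{x ≤ 0} = n and μ{x > 0} = 0 into a distribution μ' with μ'{x ≥ d−1} ≥ 1. -/
/-- The total mass of `μ` on a set `A` of positions. -/
noncomputable def mass (μ : ℝ →₀ ℝ) (A : Set ℝ) : ℝ :=
  ∑ x ∈ μ.support, Set.indicator A μ x

/-- The `j`-th moment of a finitely supported mass function. -/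
noncomputable def moment (j : ℕ) (μ : ℝ →₀ ℝ) : ℝ :=
  ∑ x ∈ μ.support, μ x * x ^ j

/-- The spread `S[μ] = Σ_{i<j} m_i m_j |x_i - x_j| = (1/2)·Σ_{x,y} μ(x) μ(y) |x - y|`. -/
noncomputable def spread (μ : ℝ →₀ ℝ) : ℝ :=
  (1 / 2) * ∑ x ∈ μ.support, ∑ y ∈ μ.support, μ x * μ y * |x - y|

/-- A distribution: finitely supported, nonnegative, not identically zero. -/
def IsDistribution (μ : ℝ →₀ ℝ) : Prop :=
  (∀ x, 0 ≤ μ x) ∧ μ ≠ 0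

/-- A move `([a, a+1], δ)`: a signed distribution `δ` supported in `[a, a+1]`
with vanishing total mass and first moment. -/
structure Move where
  a : ℝ
  δ : ℝ →₀ ℝ
  supp_subset : ∀ x, δ x ≠ 0 → a ≤ x ∧ x ≤ a + 1
  m0 : moment 0 δ = 0
  m1 : moment 1 δ = 0

/-- The center of a move. -/
noncomputable def Move.center (v : Move) : ℝ := v.a + 1 / 2

/-- `μ 0, μ 1, …, μ ℓ` is a sequence of distributions obtained by applying the
moves `v 0, …, v (ℓ-1)` in order (each move applicable, i.e. each result is a
distribution). -/
def IsMoveSeq (ℓ : ℕ) (v : ℕ → Move) (μ : ℕ → ℝ →₀ ℝ) : Prop :=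
  (∀ i ≤ ℓ, IsDistribution (μ i)) ∧ ∀ i < ℓ, μ (i + 1) = μ i + (v i).δ

/-- `μ_max(A) = max_{0 ≤ i ≤ ℓ} μ_i(A)`. -/
noncomputable def muMax (ℓ : ℕ) (μ : ℕ → ℝ →₀ ℝ) (A : Set ℝ) : ℝ :=
  (Finset.range (ℓ + 1)).sup' (Finset.nonempty_range_iff.mpr (Nat.succ_ne_zero ℓ))
    (fun i => mass (μ i) A)

open scoped Classical in
/-- The number of moves among `v 0, …, v (ℓ-1)` whose center lies in `(a, ∞)`. -/
noncomputable def movesBeyond (ℓ : ℕ) (v : ℕ → Move) (a : ℝ) : ℕ :=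
  ((Finset.range ℓ).filter (fun i => a < (v i).center)).card

/-- A sequence of moves is weight-constrained (w.r.t. the generated sequence of
distributions) if for every `a` the number of moves centered in `(a, ∞)` is at
most `μ_max{x > a}`. -/
def WeightConstrained (ℓ : ℕ) (v : ℕ → Move) (μ : ℕ → ℝ →₀ ℝ) : Prop :=
  ∀ a : ℝ, (movesBeyond ℓ v a : ℝ) ≤ muMax ℓ μ {x | a < x}

/-- `μ'` is a basic split of `μ`: one point mass `(x, μ x)` of `μ` is replaced by
finitely many point masses of positive mass with total mass `μ x` and center of
mass at `x`, the remaining point masses being unchanged. -/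
def BasicSplit (μ μ' : ℝ →₀ ℝ) : Prop :=
  ∃ (x : ℝ) (ν : ℝ →₀ ℝ), 0 < μ x ∧ (∀ y, 0 ≤ ν y) ∧
    moment 0 ν = μ x ∧ moment 1 ν = μ x * x ∧ μ' = μ.erase x + ν

/-- `μ ⪯ μ'` : `μ'` is obtained from `μ` by finitely many basic splits. -/
def Splits (μ μ' : ℝ →₀ ℝ) : Prop := Relation.ReflTransGen BasicSplit μ μ'

/-- `ν` is the result of the extreme move on `[a, b]` applied to `μ`: `ν` agrees
with `μ` outside `[a, b]`, vanishes on `(a, b)`, and has the same total mass and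
first moment as `μ` (so all mass in `[a, b]` is moved to the endpoints). -/
def IsExtremeMoveOn (a b : ℝ) (μ ν : ℝ →₀ ℝ) : Prop :=
  (∀ x, x ∉ Set.Icc a b → ν x = μ x) ∧
  (∀ x, x ∈ Set.Ioo a b → ν x = 0) ∧
  moment 0 ν = moment 0 μ ∧ moment 1 ν = moment 1 μ

/-- The block `[xc, xc+1] × [yc, yc+h]`. -/
def blockRegion (h xc yc : ℝ) : Set (ℝ × ℝ) :=
  Set.Icc xc (xc + 1) ×ˢ Set.Icc yc (yc + h)

/-- The interior of the block `[xc, xc+1] × [yc, yc+h]`. -/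
def blockInterior (h xc yc : ℝ) : Set (ℝ × ℝ) :=
  Set.Ioo xc (xc + 1) ×ˢ Set.Ioo yc (yc + h)

/-- The table `B₀ = (−∞,0] × (−∞,0]`. -/
def tableRegion : Set (ℝ × ℝ) := Set.Iic 0 ×ˢ Set.Iic 0

/-- A stack of `n` blocks of height `h > 0` with lower-left corners `(x i, y i)`:
the interiors of the blocks are pairwise disjoint. -/
def IsStack (n : ℕ) (h : ℝ) (x y : Fin n → ℝ) : Prop :=
  0 < h ∧ Pairwise fun i j : Fin n =>
    Disjoint (blockInterior h (x i) (y i)) (blockInterior h (x j) (y j))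

/-- Block `i` rests on block `j`: they intersect and `y i = y j + h`. -/
def RestsOnBlock (n : ℕ) (h : ℝ) (x y : Fin n → ℝ) (i j : Fin n) : Prop :=
  (blockRegion h (x i) (y i) ∩ blockRegion h (x j) (y j)).Nonempty ∧ y i = y j + h

/-- Block `i` rests on the table: it intersects the table region. -/
def RestsOnTable (n : ℕ) (h : ℝ) (x y : Fin n → ℝ) (i : Fin n) : Prop :=
  (blockRegion h (x i) (y i) ∩ tableRegion).Nonempty

/-- A stack is balanced if there is a collection of finitely many nonnegative
upward forces acting between each block and the blocks (or table) it rests on,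
applied at points of the corresponding contact intervals (with equal downward
reactions), under which every block is in equilibrium (zero net force and zero
net moment).  Here `f j i` records the upward forces, as a finitely supported
function from positions (x-coordinates) to magnitudes, applied to block `i` by
`j` (where `j = none` is the table and `j = some j'` is block `j'`). -/
def IsBalanced (n : ℕ) (h : ℝ) (x y : Fin n → ℝ) : Prop :=
  ∃ f : Option (Fin n) → Fin n → (ℝ →₀ ℝ),
    (∀ j i t, 0 ≤ f j i t) ∧
    (∀ i j : Fin n, ¬ RestsOnBlock n h x y i j → f (some j) i = 0) ∧
    (∀ i : Fin n, ¬ RestsOnTable n h x y i → f none i = 0) ∧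
    (∀ i j : Fin n, ∀ t, f (some j) i t ≠ 0 →
        max (x i) (x j) ≤ t ∧ t ≤ min (x i + 1) (x j + 1)) ∧
    (∀ i : Fin n, ∀ t, f none i t ≠ 0 → x i ≤ t ∧ t ≤ min (x i + 1) 0) ∧
    (∀ i : Fin n,
      (∑ j : Option (Fin n), moment 0 (f j i)) = 1 + ∑ k : Fin n, moment 0 (f (some i) k) ∧
      (∑ j : Option (Fin n), moment 1 (f j i)) = (x i + 1 / 2) + ∑ k : Fin n, moment 1 (f (some i) k))


section Helpers

lemma moment_eq_sum (j : ℕ) (μ : ℝ →₀ ℝ) : moment j μ = μ.sum (fun a b => b * a ^ j) := rfl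

lemma moment_add (j : ℕ) (μ ν : ℝ →₀ ℝ) : moment j (μ + ν) = moment j μ + moment j ν := by
  simp only [moment_eq_sum]
  exact Finsupp.sum_add_index' (fun a => zero_mul _) (fun a b c => add_mul _ _ _)

lemma moment_zero (j : ℕ) : moment j (0 : ℝ →₀ ℝ) = 0 := by
  simp [moment]

noncomputable def momentHom (j : ℕ) : (ℝ →₀ ℝ) →+ ℝ :=
  ⟨⟨moment j, moment_zero j⟩, moment_add j⟩

lemma moment_sum (j : ℕ) {ι : Type*} (s : Finset ι) (f : ι → ℝ →₀ ℝ) :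
    moment j (∑ i ∈ s, f i) = ∑ i ∈ s, moment j (f i) :=
  map_sum (momentHom j) f s

lemma moment_sub (j : ℕ) (μ ν : ℝ →₀ ℝ) : moment j (μ - ν) = moment j μ - moment j ν :=
  map_sub (momentHom j) μ ν

lemma moment_single (j : ℕ) (c a : ℝ) : moment j (Finsupp.single c a) = a * c ^ j := by
  rw [moment_eq_sum]
  exact Finsupp.sum_single_index (zero_mul _)

lemma moment_zero_nonneg {μ : ℝ →₀ ℝ} (h : ∀ t, 0 ≤ μ t) : 0 ≤ moment 0 μ := by
  refine Finset.sum_nonneg fun t _ => ?_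
  simpa using h t

lemma mass_eq_sum_subset {μ : ℝ →₀ ℝ} (A : Set ℝ) {s : Finset ℝ} (hs : μ.support ⊆ s) :
    mass μ A = ∑ x ∈ s, Set.indicator A μ x := by
  refine Finset.sum_subset hs fun x _ hx => ?_
  have : μ x = 0 := Finsupp.notMem_support_iff.mp hx
  simp [Set.indicator, this]

lemma mass_mono {a b : ℝ →₀ ℝ} (hab : ∀ t, a t ≤ b t) (A : Set ℝ) :
    mass a A ≤ mass b A := by
  rw [mass_eq_sum_subset A (Finset.subset_union_left (s₂ := b.support)),
      mass_eq_sum_subset A (Finset.subset_union_right (s₁ := a.support))]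
  refine Finset.sum_le_sum fun x _ => ?_
  by_cases hx : x ∈ A
  · simpa [Set.indicator, hx] using hab x
  · simp [Set.indicator, hx]

lemma mass_eq_moment_zero {μ : ℝ →₀ ℝ} {A : Set ℝ} (h : ∀ t, μ t ≠ 0 → t ∈ A) :
    mass μ A = moment 0 μ := by
  refine Finset.sum_congr rfl fun t ht => ?_
  have := h t (Finsupp.mem_support_iff.mp ht)
  simp [Set.indicator, this]

lemma mass_eq_zero {μ : ℝ →₀ ℝ} {A : Set ℝ} (h : ∀ t, μ t ≠ 0 → t ∉ A) :
    mass μ A = 0 := by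
  refine Finset.sum_eq_zero fun t ht => ?_
  have := h t (Finsupp.mem_support_iff.mp ht)
  simp [Set.indicator, this]

lemma ne_zero_of_moment_zero_ne {μ : ℝ →₀ ℝ} (h : moment 0 μ ≠ 0) : μ ≠ 0 := by
  intro h0; exact h (h0 ▸ moment_zero 0)

lemma sorted_list_exists {n : ℕ} (y : Fin n → ℝ) (S : Finset (Fin n)) :
    ∃ L : List (Fin n), L.Nodup ∧ (∀ i, i ∈ L ↔ i ∈ S) ∧ L.length = S.card ∧
      ∀ (a b : ℕ) (_ : a < L.length) (_ : b < L.length), a ≤ b → y L[a] ≤ y L[b] := by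
  classical
  refine ⟨S.toList.mergeSort (fun i j => decide (y i ≤ y j)), ?_, ?_, ?_, ?_⟩
  · exact ((List.mergeSort_perm _ _).nodup_iff).mpr S.nodup_toList
  · intro i; rw [(List.mergeSort_perm _ _).mem_iff, Finset.mem_toList]
  · rw [(List.mergeSort_perm _ _).length_eq, Finset.length_toList]
  · have hs := List.pairwise_mergeSort (le := fun i j => decide (y i ≤ y j))
      (fun a b c hab hbc => decide_eq_true
        (le_trans (of_decide_eq_true hab) (of_decide_eq_true hbc)))
      (fun a b => by simpa [Bool.or_eq_true, decide_eq_true_iff] using le_total (y a) (y b))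
      S.toList
    rw [List.pairwise_iff_getElem] at hs
    intro a b ha hb hab
    rcases eq_or_lt_of_le hab with rfl | hab
    · exact le_refl _
    · exact of_decide_eq_true (hs a b ha hb hab)

variable {α : Type*} [DecidableEq α]

lemma take_toFinset_succ {L : List α} {m : ℕ} (hm : m < L.length) :
    (L.take (m+1)).toFinset = insert L[m] (L.take m).toFinset := by
  rw [List.take_succ]
  simp only [List.getElem?_eq_getElem hm, Option.toList_some, List.toFinset_append,
    List.toFinset_cons, List.toFinset_nil, insert_empty_eq]
  rw [Finset.union_comm]
  simp [Finset.insert_eq, -Finset.singleton_union]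

lemma mem_take_iff {L : List α} {m : ℕ} {i : α} :
    i ∈ (L.take m).toFinset ↔ ∃ idx, ∃ _ : idx < L.length, idx < m ∧ L[idx] = i := by
  simp only [List.mem_toFinset, List.mem_iff_getElem]
  constructor
  · rintro ⟨idx, h, rfl⟩
    have h' : idx < L.length := by
      have := h; simp [List.length_take] at this; omega
    have hm : idx < m := by
      have := h; simp [List.length_take] at this; omega
    exact ⟨idx, h', hm, (List.getElem_take ..).symm⟩
  · rintro ⟨idx, h, hm, rfl⟩
    have h2 : idx < (L.take m).length := by simp [List.length_take]; omega
    exact ⟨idx, h2, List.getElem_take ..⟩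

lemma getElem_not_mem_take {L : List α} (hL : L.Nodup) {m : ℕ} (hm : m < L.length) :
    L[m] ∉ (L.take m).toFinset := by
  rw [mem_take_iff]
  rintro ⟨idx, h, hlt, heq⟩
  exact absurd (List.Nodup.getElem_inj_iff hL |>.mp heq) (Nat.ne_of_lt hlt)

end Helpers

/-- **Lemma (from overhang to lossy mass movement).** If there is a balanced
stack of `n` unit-length unit-weight blocks achieving an overhang of `d`, then
some sequence of at most `n − 1` lossy moves transforms a distribution `μ` with
`M₀[μ] = μ{x ≤ 0} = n` and `μ{x > 0} = 0` into a distribution `μ'` with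
`μ'{x ≥ d − 1} ≥ 1`. -/
theorem overhang_to_lossy_moves (n : ℕ) (h : ℝ) (x y : Fin n → ℝ) (d : ℝ)
    (hstack : IsStack n h x y) (hbal : IsBalanced n h x y)
    (hover : ∃ k : Fin n, x k + 1 = d) :
    ∃ (ℓ : ℕ) (v : ℕ → Move) (μ : ℕ → ℝ →₀ ℝ),
      ℓ ≤ n - 1 ∧
      (∀ i ≤ ℓ, IsDistribution (μ i)) ∧
      (∀ i < ℓ, μ (i + 1) = μ i + (v i).δ - Finsupp.single (v i).center 1) ∧
      moment 0 (μ 0) = (n : ℝ) ∧ mass (μ 0) {t | t ≤ 0} = (n : ℝ) ∧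
      mass (μ 0) {t | 0 < t} = 0 ∧
      1 ≤ mass (μ ℓ) {t | d - 1 ≤ t} := by
  classical
  obtain ⟨k, hk⟩ := hover
  obtain ⟨hpos, -⟩ := hstack
  obtain ⟨f, hf0, hfblock, hftable, hsb, hst, heq⟩ := hbal
  -- blocks strictly below the level of block `k`
  set S : Finset (Fin n) := Finset.univ.filter (fun i => y i < y k) with hSdef
  have hkS : k ∉ S := by simp [hSdef]
  obtain ⟨L, hLnodup, hmemL, hLlen, hmono⟩ := sorted_list_exists y S
  set P : ℕ → Finset (Fin n) := fun m => (L.take m).toFinset with hPdef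
  -- total upward force emitted by block j, and total force received by block i
  set g : Fin n → (ℝ →₀ ℝ) := fun j => ∑ k' : Fin n, f (some j) k' with hgdef
  set fb : Fin n → (ℝ →₀ ℝ) := fun i => f none i + ∑ j : Fin n, f (some j) i with hfbdef
  -- equilibrium in terms of g and fb
  have heq0 : ∀ i, moment 0 (fb i) = 1 + moment 0 (g i) := by
    intro i
    have h1 := (heq i).1
    rw [Fintype.sum_option] at h1
    simp only [hfbdef, hgdef, moment_add, moment_sum]
    linarith
  have heq1 : ∀ i, moment 1 (fb i) = (x i + 1 / 2) + moment 1 (g i) := by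
    intro i
    have h1 := (heq i).2
    rw [Fintype.sum_option] at h1
    simp only [hfbdef, hgdef, moment_add, moment_sum]
    linarith
  set δB : Fin n → (ℝ →₀ ℝ) :=
    fun i => g i + Finsupp.single (x i + 1 / 2) 1 - fb i with hδB
  have hδ0 : ∀ i, moment 0 (δB i) = 0 := by
    intro i
    simp only [hδB, moment_sub, moment_add, moment_single, heq0 i]
    ring
  have hδ1 : ∀ i, moment 1 (δB i) = 0 := by
    intro i
    simp only [hδB, moment_sub, moment_add, moment_single, heq1 i]
    ring
  have hδsupp : ∀ i t, δB i t ≠ 0 → x i ≤ t ∧ t ≤ x i + 1 := by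
    intro i t ht
    have hcase : g i t ≠ 0 ∨ (Finsupp.single (x i + 1 / 2) (1:ℝ)) t ≠ 0 ∨ fb i t ≠ 0 := by
      by_contra hc
      push_neg at hc
      apply ht
      simp only [hδB, Finsupp.sub_apply, Finsupp.add_apply, hc.1, hc.2.1, hc.2.2]
      norm_num
    rcases hcase with hg | hs | hfb
    · rw [hgdef] at hg
      rw [Finsupp.finset_sum_apply] at hg
      obtain ⟨k', -, hk'⟩ := Finset.exists_ne_zero_of_sum_ne_zero hg
      obtain ⟨h1, h2⟩ := hsb k' i t hk'
      exact ⟨le_trans (le_max_right _ _) h1, le_trans h2 (min_le_right _ _)⟩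
    · have hteq : t = x i + 1 / 2 := by
        by_contra hne
        apply hs
        rw [Finsupp.single_apply, if_neg (fun hc => hne hc.symm)]
      constructor <;> (rw [hteq]; norm_num)
    · rw [hfbdef] at hfb
      rw [Finsupp.add_apply, Finsupp.finset_sum_apply] at hfb
      rcases (by by_contra hc; push_neg at hc; apply hfb; simp [hc.1, hc.2] :
          f none i t ≠ 0 ∨ (∑ j : Fin n, (f (some j) i) t) ≠ 0) with h1 | h2
      · obtain ⟨ha, hb⟩ := hst i t h1
        exact ⟨ha, le_trans hb (min_le_left _ _)⟩
      · obtain ⟨j, -, hj⟩ := Finset.exists_ne_zero_of_sum_ne_zero h2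
        obtain ⟨ha, hb⟩ := hsb i j t hj
        exact ⟨le_trans (le_max_left _ _) ha, le_trans hb (min_le_left _ _)⟩
  -- the moves
  set vB : Fin n → Move := fun i => ⟨x i, δB i, hδsupp i, hδ0 i, hδ1 i⟩ with hvB
  set v : ℕ → Move := fun m =>
    if hm : m < L.length then vB L[m]
    else ⟨0, 0, fun t ht => absurd rfl ht, moment_zero 0, moment_zero 1⟩ with hv
  -- the distributions
  set μs : ℕ → (ℝ →₀ ℝ) := fun m =>
    (∑ i ∈ Finset.univ \ P m, f none i) +
      ∑ j ∈ P m, ∑ k' ∈ Finset.univ \ P m, f (some j) k' with hμs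
  have hμnn : ∀ m t, 0 ≤ μs m t := by
    intro m t
    simp only [hμs, Finsupp.add_apply, Finsupp.finset_sum_apply]
    refine add_nonneg (Finset.sum_nonneg fun i _ => hf0 none i t)
      (Finset.sum_nonneg fun j _ => Finset.sum_nonneg fun k' _ => hf0 (some j) k' t)
  -- membership lemmas
  have hyle : ∀ m, ∀ _ : m < L.length, ∀ i, i ∈ P (m+1) → y i ≤ y L[m] := by
    intro m hm i hi
    simp only [hPdef] at hi
    rw [take_toFinset_succ hm] at hi
    rcases Finset.mem_insert.mp hi with rfl | hi
    · exact le_refl _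
    · obtain ⟨idx, hlen, hlt, rfl⟩ := mem_take_iff.mp hi
      exact hmono idx m hlen hm (le_of_lt hlt)
  have hin : ∀ m, ∀ _ : m < L.length, ∀ j, j ∈ S → y j < y L[m] → j ∈ P m := by
    intro m hm j hjS hjy
    have hjL : j ∈ L := (hmemL j).mpr hjS
    obtain ⟨idx, hlen, rfl⟩ := List.mem_iff_getElem.mp hjL
    by_cases hidx : idx < m
    · exact mem_take_iff.mpr ⟨idx, hlen, hidx, rfl⟩
    · exact absurd (hmono m idx hm hlen (le_of_not_gt hidx)) (not_le.mpr hjy)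
  have hLS : ∀ m, ∀ _ : m < L.length, L[m] ∈ S := fun m hm => (hmemL _).mp (List.getElem_mem _)
  -- forces vanish appropriately
  have hA : ∀ m, ∀ hm : m < L.length, ∀ k', k' ∈ P (m+1) → f (some L[m]) k' = 0 := by
    intro m hm k' hk'
    refine hfblock k' L[m] fun hrest => ?_
    have h1 := hrest.2
    have h2 := hyle m hm k' hk'
    linarith
  have hB : ∀ m, ∀ hm : m < L.length, ∀ j, j ∉ P m → f (some j) L[m] = 0 := by
    intro m hm j hj
    refine hfblock L[m] j fun hrest => ?_
    have h1 := hrest.2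
    have hbS : y L[m] < y k := by
      have := hLS m hm; rw [hSdef, Finset.mem_filter] at this; exact this.2
    have hjS : j ∈ S := by
      rw [hSdef, Finset.mem_filter]
      exact ⟨Finset.mem_univ _, by linarith⟩
    exact hj (hin m hm j hjS (by linarith))
  -- the recurrence
  have hrec : ∀ m (hm : m < L.length),
      μs (m+1) = μs m + δB L[m] - Finsupp.single (x L[m] + 1 / 2) 1 := by
    intro m hm
    have hbQ : L[m] ∉ P m := getElem_not_mem_take hLnodup hm
    have hQ' : P (m+1) = insert L[m] (P m) := by
      simp only [hPdef]; exact take_toFinset_succ hm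
    set D := Finset.univ \ insert L[m] (P m) with hD
    have hbnot : L[m] ∉ D := by simp [hD]
    have huniv : Finset.univ \ P m = insert L[m] D := by
      ext i
      simp only [hD, Finset.mem_sdiff, Finset.mem_univ, true_and, Finset.mem_insert]
      by_cases hib : i = L[m]
      · subst hib; tauto
      · tauto
    have E3 : ∑ k' ∈ D, f (some L[m]) k' = g L[m] := by
      rw [hgdef]
      refine Finset.sum_subset (Finset.subset_univ _) fun k' _ hk' => ?_
      refine hA m hm k' ?_
      have h2 : k' ∈ insert L[m] (P m) := by
        by_contra h3
        exact hk' (by rw [hD]; exact Finset.mem_sdiff.mpr ⟨Finset.mem_univ _, h3⟩)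
      rw [hQ']
      exact h2
    have E5 : ∑ j ∈ P m, f (some j) L[m] = ∑ j : Fin n, f (some j) L[m] :=
      Finset.sum_subset (Finset.subset_univ _) fun j _ hj => hB m hm j hj
    simp only [hμs, hδB]
    rw [hQ', Finset.sum_insert hbQ, ← hD, E3, huniv, Finset.sum_insert hbnot]
    simp only [Finset.sum_insert hbnot, Finset.sum_add_distrib]
    rw [E5]
    simp only [hfbdef]
    abel
  -- total mass invariant
  have hminv : ∀ m, m ≤ L.length → moment 0 (μs m) = (n : ℝ) - m := by
    intro m
    induction m with
    | zero =>
      intro _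
      have hP0 : P 0 = ∅ := by simp [hPdef]
      have : μs 0 = ∑ i : Fin n, f none i := by
        simp [hμs, hP0]
      rw [this, moment_sum]
      have h1 : ∀ i : Fin n, moment 0 (f none i) =
          1 + (∑ k' : Fin n, moment 0 (f (some i) k')) -
            ∑ j : Fin n, moment 0 (f (some j) i) := by
        intro i
        have := (heq i).1
        rw [Fintype.sum_option] at this
        linarith
      rw [Finset.sum_congr rfl fun i _ => h1 i]
      rw [Finset.sum_sub_distrib, Finset.sum_add_distrib]
      rw [Finset.sum_comm (s := Finset.univ) (t := Finset.univ)
        (f := fun i j => moment 0 (f (some j) i))]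
      simp
    | succ m ih =>
      intro hm
      have hm' : m < L.length := hm
      rw [hrec m hm', moment_sub, moment_add, hδ0, moment_single,
        ih (le_of_lt hm')]
      push_cast
      ring
  -- length bound
  have hnpos : 0 < n := k.pos
  have hℓle : L.length ≤ n - 1 := by
    rw [hLlen]
    have hsub : S ⊆ Finset.univ.erase k := by
      intro i hi
      rw [Finset.mem_erase]
      refine ⟨fun hc => ?_, Finset.mem_univ _⟩
      rw [hSdef, Finset.mem_filter] at hi
      exact absurd (hc ▸ hi.2) (lt_irrefl _)
    calc S.card ≤ (Finset.univ.erase k).card := Finset.card_le_card hsub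
      _ = n - 1 := by rw [Finset.card_erase_of_mem (Finset.mem_univ _), Finset.card_univ,
        Fintype.card_fin]
  -- distributions
  have hdist : ∀ m, m ≤ L.length → IsDistribution (μs m) := by
    intro m hm
    refine ⟨hμnn m, ne_zero_of_moment_zero_ne ?_⟩
    rw [hminv m hm]
    have h1 : m < n := by omega
    have : (m : ℝ) < n := by exact_mod_cast h1
    linarith
  -- initial distribution facts
  have hsupp0 : ∀ t, μs 0 t ≠ 0 → t ≤ 0 := by
    intro t ht
    have hP0 : P 0 = ∅ := by simp [hPdef]
    have h2 : μs 0 = ∑ i : Fin n, f none i := by simp [hμs, hP0]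
    rw [h2, Finsupp.finset_sum_apply] at ht
    obtain ⟨i, -, hi⟩ := Finset.exists_ne_zero_of_sum_ne_zero ht
    exact le_trans (hst i t hi).2 (min_le_right _ _)
  -- final distribution dominates the forces below block k
  have hPℓ : P L.length = S := by
    ext i
    simp only [hPdef, List.take_length, List.mem_toFinset]
    exact hmemL i
  have hfbk_le : ∀ t, fb k t ≤ μs L.length t := by
    intro t
    have hkD : k ∈ Finset.univ \ S := by simp [hkS]
    have hA' : ∑ j : Fin n, (f (some j) k) t = ∑ j ∈ S, (f (some j) k) t := by
      symm
      refine Finset.sum_subset (Finset.subset_univ _) fun j _ hj => ?_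
      have hzero : f (some j) k = 0 := by
        refine hfblock k j fun hrest => ?_
        have h1 := hrest.2
        refine hj ?_
        rw [hSdef, Finset.mem_filter]
        exact ⟨Finset.mem_univ _, by linarith⟩
      simp [hzero]
    simp only [hμs, hPℓ, hfbdef, Finsupp.add_apply, Finsupp.finset_sum_apply]
    refine add_le_add ?_ ?_
    · exact Finset.single_le_sum (f := fun i => (f none i) t)
        (fun i _ => hf0 none i t) hkD
    · rw [hA']
      refine Finset.sum_le_sum fun j _ => ?_
      exact Finset.single_le_sum (f := fun k' => (f (some j) k') t)
        (fun k' _ => hf0 (some j) k' t) hkD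
  have hfbsupp : ∀ t, fb k t ≠ 0 → t ∈ {t : ℝ | d - 1 ≤ t} := by
    intro t ht
    simp only [Set.mem_setOf_eq]
    rw [hfbdef, Finsupp.add_apply, Finsupp.finset_sum_apply] at ht
    have hxk : x k ≤ t := by
      rcases (by by_contra hc; push_neg at hc; apply ht; simp [hc.1, hc.2] :
          (f none k) t ≠ 0 ∨ (∑ j : Fin n, (f (some j) k) t) ≠ 0) with h1 | h2
      · exact (hst k t h1).1
      · obtain ⟨j, -, hj⟩ := Finset.exists_ne_zero_of_sum_ne_zero h2
        exact le_trans (le_max_left _ _) (hsb k j t hj).1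
    linarith
  have hfbm : 1 ≤ moment 0 (fb k) := by
    rw [heq0 k]
    have hg : 0 ≤ moment 0 (g k) := by
      rw [hgdef]
      simp only [moment_sum]
      exact Finset.sum_nonneg fun k' _ => moment_zero_nonneg (hf0 (some k) k')
    linarith
  have hfinal : 1 ≤ mass (μs L.length) {t : ℝ | d - 1 ≤ t} := by
    calc (1:ℝ) ≤ moment 0 (fb k) := hfbm
      _ = mass (fb k) {t : ℝ | d - 1 ≤ t} := (mass_eq_moment_zero hfbsupp).symm
      _ ≤ mass (μs L.length) _ := mass_mono hfbk_le _
  refine ⟨L.length, v, μs, hℓle, hdist, ?_, ?_, ?_, ?_, hfinal⟩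
  · intro i hi
    simp only [hv]
    rw [dif_pos hi]
    simp only [hvB, Move.center]
    exact hrec i hi
  · have := hminv 0 (Nat.zero_le _)
    simpa using this
  · have hm0 : mass (μs 0) {t : ℝ | t ≤ 0} = moment 0 (μs 0) :=
      mass_eq_moment_zero (fun t ht => by simpa using hsupp0 t ht)
    rw [hm0, hminv 0 (Nat.zero_le _)]
    simp
  · exact mass_eq_zero fun t ht => by
      simp only [Set.mem_setOf_eq]
      exact not_lt.mpr (hsupp0 t ht)
end

section
/- For any discrete distribution μ, the spread and moments satisfy S[μ]² ≤ (1/3)·M_2[μ]·M_0[μ]³. -/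
lemma telescope_aux (s : Finset ℝ) (w f : ℝ → ℝ) :
    ∑ x ∈ s, (f ((∑ y ∈ s.filter (fun y => y < x), w y) + w x)
      - f (∑ y ∈ s.filter (fun y => y < x), w y))
    = f (∑ x ∈ s, w x) - f 0 := by
  classical
  induction s using Finset.induction_on_max with
  | empty => simp
  | insert a s ha ih =>
    have hax : a ∉ s := fun h => lt_irrefl a (ha a h)
    have h1 : (insert a s).filter (fun y => y < a) = s := by
      rw [Finset.filter_insert, if_neg (lt_irrefl a)]
      exact Finset.filter_true_of_mem (fun x hx => ha x hx)
    have h2 : ∀ x ∈ s, (insert a s).filter (fun y => y < x) = s.filter (fun y => y < x) := by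
      intro x hx
      rw [Finset.filter_insert, if_neg (not_lt.mpr (le_of_lt (ha x hx)))]
    have h3 : (∑ x ∈ s, (f ((∑ y ∈ (insert a s).filter (fun y => y < x), w y) + w x)
        - f (∑ y ∈ (insert a s).filter (fun y => y < x), w y)))
        = ∑ x ∈ s, (f ((∑ y ∈ s.filter (fun y => y < x), w y) + w x)
        - f (∑ y ∈ s.filter (fun y => y < x), w y)) :=
      Finset.sum_congr rfl (fun x hx => by rw [h2 x hx])
    rw [Finset.sum_insert hax, h1, h3, ih, Finset.sum_insert hax]
    ring

/-- **Lemma (spread vs. second moment).** For any discrete distribution `μ`,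
`S[μ]² ≤ (1/3) M₂[μ] M₀[μ]³`. -/
theorem spread_sq_le (μ : ℝ →₀ ℝ) (hμ : IsDistribution μ) :
    spread μ ^ 2 ≤ (1 / 3) * moment 2 μ * moment 0 μ ^ 3 := by
  classical
  obtain ⟨hpos, -⟩ := hμ
  set s := μ.support with hs
  set M : ℝ := ∑ x ∈ s, μ x with hM
  set B : ℝ → ℝ := fun x => ∑ y ∈ s.filter (fun y => y < x), μ y with hB
  set A : ℝ → ℝ := fun x => ∑ y ∈ s.filter (fun y => x < y), μ y with hA
  set t : ℝ → ℝ := fun x => B x - A x with ht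
  -- partition identity: for x ∈ s, B x + μ x + A x = M
  have hpart : ∀ x ∈ s, B x + μ x + A x = M := by
    intro x hx
    have h1 : M = B x + ∑ y ∈ s.filter (fun y => ¬ y < x), μ y :=
      (Finset.sum_filter_add_sum_filter_not s (fun y => y < x) _).symm
    have h2 : (s.filter (fun y => ¬ y < x)).filter (fun y => x < y)
        = s.filter (fun y => x < y) := by
      rw [Finset.filter_filter]
      exact Finset.filter_congr (fun y _ => by constructor <;> intro h <;>
        [exact h.2; exact ⟨not_lt.mpr h.le, h⟩])
    have h3 : (s.filter (fun y => ¬ y < x)).filter (fun y => ¬ x < y) = {x} := by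
      ext y
      simp only [Finset.filter_filter, Finset.mem_filter, Finset.mem_singleton, not_lt]
      constructor
      · rintro ⟨hy, h1', h2'⟩; exact le_antisymm h2' h1'
      · rintro rfl; exact ⟨hx, le_refl _, le_refl _⟩
    have h4 := Finset.sum_filter_add_sum_filter_not (s.filter (fun y => ¬ y < x))
      (fun y => x < y) (fun y => μ y)
    rw [h2, h3, Finset.sum_singleton] at h4
    rw [h1, ← h4]; ring
  -- swap lemma
  have swap : ∀ g : ℝ → ℝ → ℝ,
      (∑ x ∈ s, ∑ y ∈ s.filter (fun y => y < x), g x y)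
      = ∑ x ∈ s, ∑ y ∈ s.filter (fun y => x < y), g y x := by
    intro g
    have e1 : ∀ x, (∑ y ∈ s.filter (fun y => y < x), g x y)
        = ∑ y ∈ s, if y < x then g x y else 0 := fun x =>
      Finset.sum_filter _ _
    have e2 : ∀ x, (∑ y ∈ s.filter (fun y => x < y), g y x)
        = ∑ y ∈ s, if x < y then g y x else 0 := fun x =>
      Finset.sum_filter _ _
    simp_rw [e1, e2]
    rw [Finset.sum_comm]
  -- spread identity
  have hspread : spread μ = ∑ x ∈ s, μ x * x * t x := by
    have inner : ∀ x ∈ s, (∑ y ∈ s, μ x * μ y * |x - y|)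
        = (∑ y ∈ s.filter (fun y => y < x), μ x * μ y * (x - y))
          + ∑ y ∈ s.filter (fun y => x < y), μ x * μ y * (y - x) := by
      intro x hx
      have h1 := Finset.sum_filter_add_sum_filter_not s (fun y => y < x)
        (fun y => μ x * μ y * |x - y|)
      have h2 : (s.filter (fun y => ¬ y < x)).filter (fun y => x < y)
          = s.filter (fun y => x < y) := by
        rw [Finset.filter_filter]
        exact Finset.filter_congr (fun y _ => by constructor <;> intro h <;>
          [exact h.2; exact ⟨not_lt.mpr h.le, h⟩])
      have h3 : (s.filter (fun y => ¬ y < x)).filter (fun y => ¬ x < y) = {x} := by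
        ext y
        simp only [Finset.filter_filter, Finset.mem_filter, Finset.mem_singleton, not_lt]
        constructor
        · rintro ⟨hy, h1', h2'⟩; exact le_antisymm h2' h1'
        · rintro rfl; exact ⟨hx, le_refl _, le_refl _⟩
      have h4 := Finset.sum_filter_add_sum_filter_not (s.filter (fun y => ¬ y < x))
        (fun y => x < y) (fun y => μ x * μ y * |x - y|)
      rw [h2, h3, Finset.sum_singleton] at h4
      rw [← h1, ← h4]
      have hxx : μ x * μ x * |x - x| = 0 := by simp
      rw [hxx, add_zero]
      congr 1
      · refine Finset.sum_congr rfl fun y hy => ?_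
        rw [abs_of_pos (sub_pos.mpr (Finset.mem_filter.mp hy).2)]
      · refine Finset.sum_congr rfl fun y hy => ?_
        rw [abs_of_neg (sub_neg.mpr (Finset.mem_filter.mp hy).2), neg_sub]
    have dup : (∑ x ∈ s, ∑ y ∈ s.filter (fun y => x < y), μ x * μ y * (y - x))
        = ∑ x ∈ s, ∑ y ∈ s.filter (fun y => y < x), μ x * μ y * (x - y) := by
      rw [swap (fun x y => μ x * μ y * (x - y))]
      refine Finset.sum_congr rfl fun x _ => Finset.sum_congr rfl fun y _ => by ring
    have step1 : spread μ = ∑ x ∈ s, ∑ y ∈ s.filter (fun y => y < x),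
        μ x * μ y * (x - y) := by
      rw [spread, Finset.sum_congr rfl inner, Finset.sum_add_distrib, dup]
      ring
    rw [step1]
    have expand : ∀ x ∈ s, (∑ y ∈ s.filter (fun y => y < x), μ x * μ y * (x - y))
        = μ x * x * B x - ∑ y ∈ s.filter (fun y => y < x), μ x * μ y * y := by
      intro x _
      rw [hB, Finset.mul_sum, ← Finset.sum_sub_distrib]
      · refine Finset.sum_congr rfl fun y _ => by ring
    rw [Finset.sum_congr rfl expand, Finset.sum_sub_distrib]
    have cross : (∑ x ∈ s, ∑ y ∈ s.filter (fun y => y < x), μ x * μ y * y)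
        = ∑ x ∈ s, μ x * x * A x := by
      rw [swap (fun x y => μ x * μ y * y)]
      refine Finset.sum_congr rfl fun x _ => ?_
      rw [hA, Finset.mul_sum]
      refine Finset.sum_congr rfl fun y _ => by ring
    rw [cross, ← Finset.sum_sub_distrib]
    refine Finset.sum_congr rfl fun x _ => by rw [ht]; ring
  -- t x = 2 B x + μ x - M on s
  have htB : ∀ x ∈ s, t x = 2 * B x + μ x - M := by
    intro x hx
    have := hpart x hx
    simp only [ht]; linarith
  -- Cauchy-Schwarz
  have cs := Finset.sum_mul_sq_le_sq_mul_sq s (fun x => Real.sqrt (μ x) * x)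
    (fun x => Real.sqrt (μ x) * t x)
  have csq : ∀ x, Real.sqrt (μ x) * Real.sqrt (μ x) = μ x := fun x =>
    Real.mul_self_sqrt (hpos x)
  have cs1 : (∑ x ∈ s, μ x * x * t x) ^ 2
      ≤ (∑ x ∈ s, μ x * x ^ 2) * ∑ x ∈ s, μ x * t x ^ 2 := by
    have e1 : ∀ x, (Real.sqrt (μ x) * x) * (Real.sqrt (μ x) * t x) = μ x * x * t x := by
      intro x
      rw [show (Real.sqrt (μ x) * x) * (Real.sqrt (μ x) * t x)
        = (Real.sqrt (μ x) * Real.sqrt (μ x)) * (x * t x) by ring, csq x]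
      ring
    have e2 : ∀ x, (Real.sqrt (μ x) * x) ^ 2 = μ x * x ^ 2 := by
      intro x; rw [mul_pow, sq, csq x]
    have e3 : ∀ x, (Real.sqrt (μ x) * t x) ^ 2 = μ x * t x ^ 2 := by
      intro x; rw [mul_pow, sq, csq x]
    simpa only [e1, e2, e3] using cs
  -- bound on ∑ μ x * t x ^ 2
  have hbound : (∑ x ∈ s, μ x * t x ^ 2) ≤ M ^ 3 / 3 := by
    have tel := telescope_aux s (fun y => μ y) (fun u => (2 * u - M) ^ 3 / 6)
    have ptwise : ∀ x ∈ s, μ x * t x ^ 2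
        ≤ (2 * (B x + μ x) - M) ^ 3 / 6 - (2 * B x - M) ^ 3 / 6 := by
      intro x hx
      rw [htB x hx]
      nlinarith [pow_nonneg (hpos x) 3, hpos x]
    calc (∑ x ∈ s, μ x * t x ^ 2)
        ≤ ∑ x ∈ s, ((2 * (B x + μ x) - M) ^ 3 / 6 - (2 * B x - M) ^ 3 / 6) :=
          Finset.sum_le_sum ptwise
      _ = M ^ 3 / 3 := by
          rw [show (∑ x ∈ s, ((2 * (B x + μ x) - M) ^ 3 / 6 - (2 * B x - M) ^ 3 / 6))
            = ∑ x ∈ s, ((2 * (B x + μ x) - M) ^ 3 / 6 - (2 * B x - M) ^ 3 / 6) from rfl]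
          have : (∑ x ∈ s, ((2 * ((∑ y ∈ s.filter (fun y => y < x), μ y) + μ x) - M) ^ 3 / 6
              - (2 * (∑ y ∈ s.filter (fun y => y < x), μ y) - M) ^ 3 / 6))
              = (2 * M - M) ^ 3 / 6 - (2 * 0 - M) ^ 3 / 6 := by
            simpa using tel
          simp only [hB]
          rw [this]; ring
  -- moments
  have hm0 : moment 0 μ = M := by
    rw [moment]; exact Finset.sum_congr rfl fun x _ => by rw [pow_zero, mul_one]
  have hm2 : moment 2 μ = ∑ x ∈ s, μ x * x ^ 2 := rfl
  have hm2nn : 0 ≤ ∑ x ∈ s, μ x * x ^ 2 :=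
    Finset.sum_nonneg fun x _ => mul_nonneg (hpos x) (sq_nonneg x)
  rw [hspread, hm0, hm2]
  calc (∑ x ∈ s, μ x * x * t x) ^ 2
      ≤ (∑ x ∈ s, μ x * x ^ 2) * ∑ x ∈ s, μ x * t x ^ 2 := cs1
    _ ≤ (∑ x ∈ s, μ x * x ^ 2) * (M ^ 3 / 3) :=
        mul_le_mul_of_nonneg_left hbound hm2nn
    _ = 1 / 3 * (∑ x ∈ s, μ x * x ^ 2) * M ^ 3 := by ring
end

section
/- If a distribution μ₁ is obtained from a distribution μ₀ by an extreme move on an interval of length 1, then S[μ₁] − S[μ₀] ≥ 3·(M_2[μ₁] − M_2[μ₀])². -/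
section ExtremeMoveSpread

open MeasureTheory intervalIntegral

private lemma integral_quadratic (α β γ a b : ℝ) :
    ∫ t in a..b, (α + β * t + γ * t ^ 2) =
      α * (b - a) + β * (b ^ 2 - a ^ 2) / 2 + γ * (b ^ 3 - a ^ 3) / 3 := by
  have h1 : IntervalIntegrable (fun t : ℝ => α + β * t) volume a b := by
    apply Continuous.intervalIntegrable; continuity
  have h2 : IntervalIntegrable (fun t : ℝ => γ * t ^ 2) volume a b := by
    apply Continuous.intervalIntegrable; continuity
  have h3 : IntervalIntegrable (fun t : ℝ => (α : ℝ)) volume a b :=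
    intervalIntegrable_const
  have h4 : IntervalIntegrable (fun t : ℝ => β * t) volume a b := by
    apply Continuous.intervalIntegrable; continuity
  rw [integral_add h1 h2, integral_add h3 h4, intervalIntegral.integral_const,
    intervalIntegral.integral_const_mul, intervalIntegral.integral_const_mul, integral_id, integral_pow]
  push_cast
  simp only [smul_eq_mul]
  ring

private lemma step_integrable (x a b : ℝ) (φ : ℝ → ℝ) (hφ : Continuous φ) :
    IntervalIntegrable (fun t => if x ≤ t then φ t else 0) volume a b := by
  have h : (fun t => if x ≤ t then φ t else 0) = (Set.Ici x).indicator φ := by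
    funext t; simp [Set.indicator, Set.mem_Ici]
  rw [h]
  constructor <;>
    exact ((hφ.integrableOn_Ioc).indicator measurableSet_Ici)

private lemma step_integral (x a b : ℝ) (hax : a ≤ x) (hxb : x ≤ b)
    (φ : ℝ → ℝ) (hφ : Continuous φ) :
    ∫ t in a..b, (if x ≤ t then φ t else 0) = ∫ t in x..b, φ t := by
  rw [← integral_add_adjacent_intervals (step_integrable x a x φ hφ)
      (step_integrable x x b φ hφ)]
  have h1 : ∫ t in a..x, (if x ≤ t then φ t else 0) = 0 := by
    have hae : ∀ᵐ t : ℝ, t ≠ x := by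
      rw [ae_iff]
      have : {t : ℝ | ¬ t ≠ x} = {x} := by ext t; simp
      rw [this]
      exact Real.volume_singleton
    have : ∫ t in a..x, (if x ≤ t then φ t else 0) = ∫ t in a..x, (0:ℝ) := by
      apply intervalIntegral.integral_congr_ae
      filter_upwards [hae] with t ht hmem
      rw [Set.uIoc_of_le hax] at hmem
      rw [if_neg]
      intro hle
      exact ht (le_antisymm hmem.2 hle)
    rw [this, intervalIntegral.integral_zero]
  have h2 : ∫ t in x..b, (if x ≤ t then φ t else 0) = ∫ t in x..b, φ t := by
    apply integral_congr
    intro t htm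
    rw [Set.uIcc_of_le hxb] at htm
    simp only []; rw [if_pos htm.1]
  rw [h1, h2, zero_add]

private lemma intervalIntegrable_fsum {ι : Type*} (s : Finset ι) (f : ι → ℝ → ℝ) (a b : ℝ)
    (h : ∀ i ∈ s, IntervalIntegrable (f i) volume a b) :
    IntervalIntegrable (fun t => ∑ i ∈ s, f i t) volume a b := by
  induction s using Finset.cons_induction with
  | empty => simpa using intervalIntegrable_const (c := (0:ℝ))
  | cons i s hi ih =>
    simp only [Finset.sum_cons]
    exact (h i (Finset.mem_cons_self i s)).add
      (ih fun j hj => h j (Finset.mem_cons_of_mem hj))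

private lemma key_ineq (A : ℝ) (s : Finset ℝ) (hs : ∀ x ∈ s, A ≤ x ∧ x ≤ A + 1)
    (w : ℝ → ℝ) (hw : ∀ x ∈ s, 0 ≤ w x) :
    (∑ x ∈ s, w x * (A + 1 - x)) * (∑ x ∈ s, w x * (x - A)) -
      (1/2) * ∑ x ∈ s, ∑ y ∈ s, w x * w y * |x - y| ≥
      3 * (∑ x ∈ s, w x * ((x - A) * (A + 1 - x))) ^ 2 := by
  set p : ℝ := ∑ x ∈ s, w x * (A + 1 - x) with hp
  set q : ℝ := ∑ x ∈ s, w x * (x - A) with hq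
  set D : ℝ := ∑ x ∈ s, w x * ((x - A) * (A + 1 - x)) with hD
  set Sabs : ℝ := ∑ x ∈ s, ∑ y ∈ s, w x * w y * |x - y| with hSabs
  -- the `c` function
  set c : ℝ → ℝ := fun t => p + 3*D*(2*(t-A)-1) with hc
  have hcc : Continuous c := by rw [hc]; continuity
  set F : ℝ → ℝ := fun t => ∑ x ∈ s, (if x ≤ t then w x else 0) with hF
  -- the three component functions
  set FF : ℝ → ℝ := fun t => ∑ x ∈ s, ∑ y ∈ s, (if max x y ≤ t then w x * w y else 0) with hFF
  set G : ℝ → ℝ := fun t => ∑ x ∈ s, (if x ≤ t then (-2 * w x) * c t else 0) with hG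
  -- pointwise expansion
  have hexpand : ∀ t, (F t - c t)^2 = FF t + G t + (c t)^2 := by
    intro t
    have h1 : (F t)^2 = FF t := by
      rw [hF, hFF]
      simp only []
      rw [sq, Finset.sum_mul_sum]
      refine Finset.sum_congr rfl fun x _ => Finset.sum_congr rfl fun y _ => ?_
      by_cases hx : x ≤ t <;> by_cases hy : y ≤ t <;>
        simp [hx, hy, max_le_iff]
    have h2 : F t * c t * (-2) = G t := by
      rw [hF, hG]
      simp only []
      rw [Finset.sum_mul, Finset.sum_mul]
      refine Finset.sum_congr rfl fun x _ => ?_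
      by_cases hx : x ≤ t <;> simp [hx] <;> ring
    linear_combination h1 + h2
  -- integrability
  have hintFF : IntervalIntegrable FF volume A (A+1) := by
    apply intervalIntegrable_fsum
    intro x _
    apply intervalIntegrable_fsum
    intro y _
    exact step_integrable _ _ _ _ continuous_const
  have hintG : IntervalIntegrable G volume A (A+1) := by
    apply intervalIntegrable_fsum
    intro x _
    exact step_integrable _ _ _ _ (continuous_const.mul hcc)
  have hintC2 : IntervalIntegrable (fun t => (c t)^2) volume A (A+1) :=
    (hcc.pow 2).intervalIntegrable _ _
  -- value of ∫ FF
  have hFFval : ∫ t in A..(A+1), FF t = ∑ x ∈ s, ∑ y ∈ s, (A + 1 - max x y) * (w x * w y) := by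
    rw [hFF]
    rw [integral_finset_sum (fun x _ => intervalIntegrable_fsum _ _ _ _
      (fun y _ => step_integrable _ _ _ _ continuous_const))]
    refine Finset.sum_congr rfl fun x hx => ?_
    rw [integral_finset_sum (fun y _ => step_integrable _ _ _ _ continuous_const)]
    refine Finset.sum_congr rfl fun y hy => ?_
    have hmax1 : A ≤ max x y := le_trans (hs x hx).1 (le_max_left x y)
    have hmax2 : max x y ≤ A + 1 := max_le (hs x hx).2 (hs y hy).2
    rw [step_integral _ _ _ hmax1 hmax2 _ continuous_const,
      intervalIntegral.integral_const, smul_eq_mul]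
  -- value of ∫ G
  have hGval : ∫ t in A..(A+1), G t
      = ∑ x ∈ s, (-2 * w x) * (p*(A+1-x) + 3*D*((x-A)*(A+1-x))) := by
    rw [hG]
    rw [integral_finset_sum (fun x _ => step_integrable _ _ _ (fun t => (-2 * w x) * c t) (continuous_const.mul hcc))]
    refine Finset.sum_congr rfl fun x hx => ?_
    rw [step_integral _ _ _ (hs x hx).1 (hs x hx).2 (fun t => (-2 * w x) * c t) (continuous_const.mul hcc)]
    have hrw : (fun t => (-2 * w x) * c t)
        = fun t => ((-2*w x)*(p - 3*D - 6*D*A)) + ((-2*w x)*(6*D))*t + 0*t^2 := by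
      funext t; rw [hc]; ring
    rw [hrw, integral_quadratic]
    ring
  -- value of ∫ c²
  have hC2val : ∫ t in A..(A+1), (c t)^2 = p^2 + 3*D^2 := by
    have hrw : (fun t => (c t)^2)
        = fun t => (p - 3*D - 6*D*A)^2 + (2*(p - 3*D - 6*D*A)*(6*D))*t + (36*D^2)*t^2 := by
      funext t; rw [hc]; ring
    rw [hrw, integral_quadratic]
    ring
  -- nonnegativity
  have hnn : 0 ≤ ∫ t in A..(A+1), (F t - c t)^2 :=
    intervalIntegral.integral_nonneg (by linarith) (fun t _ => sq_nonneg _)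
  have hIeq : ∫ t in A..(A+1), (F t - c t)^2
      = (∫ t in A..(A+1), FF t) + (∫ t in A..(A+1), G t) + ∫ t in A..(A+1), (c t)^2 := by
    rw [← integral_add hintFF hintG, ← integral_add (hintFF.add hintG) hintC2]
    exact integral_congr fun t _ => hexpand t
  -- sum of the middle term
  have hGsum : ∑ x ∈ s, (-2 * w x) * (p*(A+1-x) + 3*D*((x-A)*(A+1-x)))
      = -2*p^2 - 6*D^2 := by
    have h1 : ∑ x ∈ s, (-2 * w x) * (p*(A+1-x) + 3*D*((x-A)*(A+1-x)))
        = ∑ x ∈ s, ((-2*p)*(w x*(A+1-x)) + (-6*D)*(w x*((x-A)*(A+1-x)))) :=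
      Finset.sum_congr rfl fun x _ => by ring
    rw [h1, Finset.sum_add_distrib, ← Finset.mul_sum, ← Finset.mul_sum, ← hp, ← hD]
    ring
  have hstar : p^2 + 3*D^2 ≤ ∑ x ∈ s, ∑ y ∈ s, (A + 1 - max x y) * (w x * w y) := by
    rw [hIeq, hFFval, hGval, hGsum, hC2val] at hnn
    linarith [hnn]
  -- algebraic identity
  have hqq : p * q = ∑ x ∈ s, ∑ y ∈ s, (w x * (A + 1 - x)) * (w y * (y - A)) := by
    rw [hp, hq]; exact Finset.sum_mul_sum _ _ _ _
  have hpp : p ^ 2 = ∑ x ∈ s, ∑ y ∈ s, (w x * (A + 1 - x)) * (w y * (A + 1 - y)) := by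
    rw [hp, sq]; exact Finset.sum_mul_sum _ _ _ _
  have hswap : ∑ x ∈ s, ∑ y ∈ s, (w x * (A + 1 - x)) * (w y * (y - A))
      = ∑ x ∈ s, ∑ y ∈ s, (w x * (x - A)) * (w y * (A + 1 - y)) := by
    rw [Finset.sum_comm]
    exact Finset.sum_congr rfl fun x _ => Finset.sum_congr rfl fun y _ => by ring
  have hcomb : ∑ x ∈ s, ∑ y ∈ s,
      ((1/2)*((w x * (A + 1 - x)) * (w y * (y - A)))
        + (1/2)*((w x * (x - A)) * (w y * (A + 1 - y)))
        - (1/2)*(w x * w y * |x - y|)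
        - (A + 1 - max x y) * (w x * w y)
        + (w x * (A + 1 - x)) * (w y * (A + 1 - y))) = 0 := by
    refine Finset.sum_eq_zero fun x _ => Finset.sum_eq_zero fun y _ => ?_
    rcases le_total x y with h | h
    · rw [max_eq_right h, abs_of_nonpos (by linarith)]; ring
    · rw [max_eq_left h, abs_of_nonneg (by linarith)]; ring
  have hsplit : ∑ x ∈ s, ∑ y ∈ s,
      ((1/2)*((w x * (A + 1 - x)) * (w y * (y - A)))
        + (1/2)*((w x * (x - A)) * (w y * (A + 1 - y)))
        - (1/2)*(w x * w y * |x - y|)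
        - (A + 1 - max x y) * (w x * w y)
        + (w x * (A + 1 - x)) * (w y * (A + 1 - y)))
      = (1/2) * (∑ x ∈ s, ∑ y ∈ s, (w x * (A + 1 - x)) * (w y * (y - A)))
        + (1/2) * (∑ x ∈ s, ∑ y ∈ s, (w x * (x - A)) * (w y * (A + 1 - y)))
        - (1/2) * (∑ x ∈ s, ∑ y ∈ s, w x * w y * |x - y|)
        - (∑ x ∈ s, ∑ y ∈ s, (A + 1 - max x y) * (w x * w y))
        + (∑ x ∈ s, ∑ y ∈ s, (w x * (A + 1 - x)) * (w y * (A + 1 - y))) := by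
    simp only [Finset.sum_add_distrib, Finset.sum_sub_distrib, ← Finset.mul_sum]
  rw [hsplit] at hcomb
  rw [ge_iff_le, hSabs]
  linarith [hstar, hqq, hpp, hswap, hcomb]

/-- **Lemma (extreme moves increase spread).** If `μ₁` is obtained from `μ₀` by
an extreme move in an interval of length `1`, then
`S[μ₁] − S[μ₀] ≥ 3 (M₂[μ₁] − M₂[μ₀])²`. -/
theorem extreme_move_spread (a : ℝ) (μ₀ μ₁ : ℝ →₀ ℝ)
    (h₀ : IsDistribution μ₀) (h₁ : IsDistribution μ₁)
    (hext : IsExtremeMoveOn a (a + 1) μ₀ μ₁) :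
    spread μ₁ - spread μ₀ ≥ 3 * (moment 2 μ₁ - moment 2 μ₀) ^ 2 := by
  classical
  obtain ⟨hout, hin, hm0, hm1⟩ := hext
  set T : Finset ℝ := insert a (insert (a+1) (μ₀.support ∪ μ₁.support)) with hT
  have hT₀ : μ₀.support ⊆ T := fun x hx => by
    simp only [hT, Finset.mem_insert, Finset.mem_union]; tauto
  have hT₁ : μ₁.support ⊆ T := fun x hx => by
    simp only [hT, Finset.mem_insert, Finset.mem_union]; tauto
  have haT : a ∈ T := by simp [hT]
  have hbT : (a+1) ∈ T := by simp [hT]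
  have hmom : ∀ (j : ℕ) (μ : ℝ →₀ ℝ), μ.support ⊆ T →
      moment j μ = ∑ x ∈ T, μ x * x ^ j := by
    intro j μ hsub
    exact Finset.sum_subset hsub (fun x _ hx => by
      rw [Finsupp.notMem_support_iff.mp hx]; ring)
  have hspread : ∀ (μ : ℝ →₀ ℝ), μ.support ⊆ T →
      spread μ = (1/2) * ∑ x ∈ T, ∑ y ∈ T, μ x * μ y * |x - y| := by
    intro μ hsub
    unfold spread
    congr 1
    rw [Finset.sum_subset hsub (fun x _ hx => Finset.sum_eq_zero fun y _ => by
      rw [Finsupp.notMem_support_iff.mp hx]; ring)]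
    refine Finset.sum_congr rfl fun x _ => ?_
    exact Finset.sum_subset hsub (fun y _ hy => by
      rw [Finsupp.notMem_support_iff.mp hy]; ring)
  set S : Finset ℝ := T.filter (fun x => a ≤ x ∧ x ≤ a + 1) with hS
  set Sc : Finset ℝ := T.filter (fun x => ¬(a ≤ x ∧ x ≤ a + 1)) with hSc
  have haS : a ∈ S := Finset.mem_filter.mpr ⟨haT, le_refl a, by linarith⟩
  have hbS : (a+1) ∈ S := Finset.mem_filter.mpr ⟨hbT, by linarith, le_refl _⟩
  have hne : a ≠ a + 1 := by intro h; linarith [h]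
  have hScv : ∀ y ∈ Sc, μ₁ y = μ₀ y := by
    intro y hy
    obtain ⟨_, hyP⟩ := Finset.mem_filter.mp hy
    exact hout y (by simpa [Set.mem_Icc] using hyP)
  -- zero moments of the difference on S
  have hTd : ∀ g : ℝ → ℝ, (∑ x ∈ T, (μ₁ x - μ₀ x) * g x)
      = (∑ x ∈ S, (μ₁ x - μ₀ x) * g x) + ∑ x ∈ Sc, (μ₁ x - μ₀ x) * g x :=
    fun g => (Finset.sum_filter_add_sum_filter_not T _ _).symm
  have hScd : ∀ g : ℝ → ℝ, (∑ x ∈ Sc, (μ₁ x - μ₀ x) * g x) = 0 := fun g =>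
    Finset.sum_eq_zero fun x hx => by rw [hScv x hx]; ring
  have hd0 : ∑ x ∈ S, (μ₁ x - μ₀ x) = 0 := by
    have h1 : ∑ x ∈ T, (μ₁ x - μ₀ x) * 1 = 0 := by
      have e1 := hmom 0 μ₁ hT₁
      have e0 := hmom 0 μ₀ hT₀
      simp only [pow_zero, mul_one] at e1 e0
      rw [show ∑ x ∈ T, (μ₁ x - μ₀ x) * 1 = (∑ x ∈ T, μ₁ x) - ∑ x ∈ T, μ₀ x from by
        rw [← Finset.sum_sub_distrib]; exact Finset.sum_congr rfl fun x _ => by ring,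
        ← e1, ← e0, hm0, sub_self]
    have h2 := hTd (fun _ => 1)
    rw [h1, hScd] at h2
    have h3 := h2.symm
    rw [add_zero] at h3
    calc ∑ x ∈ S, (μ₁ x - μ₀ x) = ∑ x ∈ S, (μ₁ x - μ₀ x) * 1 :=
          Finset.sum_congr rfl fun x _ => by ring
      _ = 0 := h3
  have hd1 : ∑ x ∈ S, (μ₁ x - μ₀ x) * x = 0 := by
    have h1 : ∑ x ∈ T, (μ₁ x - μ₀ x) * x = 0 := by
      have e1 := hmom 1 μ₁ hT₁
      have e0 := hmom 1 μ₀ hT₀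
      simp only [pow_one] at e1 e0
      rw [show ∑ x ∈ T, (μ₁ x - μ₀ x) * x = (∑ x ∈ T, μ₁ x * x) - ∑ x ∈ T, μ₀ x * x from by
        rw [← Finset.sum_sub_distrib]; exact Finset.sum_congr rfl fun x _ => by ring,
        ← e1, ← e0, hm1, sub_self]
    have h2 := hTd (fun x => x)
    rw [h1, hScd] at h2
    have h3 := h2.symm
    rw [add_zero] at h3
    exact h3
  -- μ₁ on S is concentrated at the endpoints
  have hμ₁S : ∀ g : ℝ → ℝ, ∑ x ∈ S, μ₁ x * g x = μ₁ a * g a + μ₁ (a+1) * g (a+1) := by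
    intro g
    have hsub2 : ({a, a+1} : Finset ℝ) ⊆ S := by
      intro x hx
      rcases Finset.mem_insert.mp hx with h | h
      · rwa [h]
      · rw [Finset.mem_singleton.mp h]; exact hbS
    rw [← Finset.sum_subset hsub2 (fun x hx hnx => ?_)]
    · rw [Finset.sum_pair hne]
    · have hxP := (Finset.mem_filter.mp hx).2
      simp only [Finset.mem_insert, Finset.mem_singleton] at hnx
      push_neg at hnx
      have : μ₁ x = 0 := hin x ⟨lt_of_le_of_ne hxP.1 (Ne.symm hnx.1),
        lt_of_le_of_ne hxP.2 hnx.2⟩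
      rw [this]; ring
  have hS1' : ∑ x ∈ S, μ₁ x = ∑ x ∈ S, μ₀ x := by
    have := hd0; rwa [Finset.sum_sub_distrib, sub_eq_zero] at this
  have hpq0 : μ₁ a + μ₁ (a+1) = ∑ x ∈ S, μ₀ x := by
    have := hμ₁S (fun _ => 1)
    simp only [mul_one] at this
    rw [← hS1', this]
  have hpq1 : μ₁ a * a + μ₁ (a+1) * (a+1) = ∑ x ∈ S, μ₀ x * x := by
    have h2 := hμ₁S (fun x => x)
    have h3 : ∑ x ∈ S, μ₁ x * x = ∑ x ∈ S, μ₀ x * x := by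
      have := hd1
      rwa [show ∑ x ∈ S, (μ₁ x - μ₀ x) * x
          = (∑ x ∈ S, μ₁ x * x) - ∑ x ∈ S, μ₀ x * x by
        rw [← Finset.sum_sub_distrib]; exact Finset.sum_congr rfl fun x _ => by ring,
        sub_eq_zero] at this
    rw [← h3, h2]
  have hsum_xa : ∑ x ∈ S, μ₀ x * (x - a)
      = (∑ x ∈ S, μ₀ x * x) - a * ∑ x ∈ S, μ₀ x := by
    rw [Finset.mul_sum, ← Finset.sum_sub_distrib]
    exact Finset.sum_congr rfl fun x _ => by ring
  have hq : μ₁ (a+1) = ∑ x ∈ S, μ₀ x * (x - a) := by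
    linear_combination hpq1 - a * hpq0 - hsum_xa
  have hp : μ₁ a = ∑ x ∈ S, μ₀ x * (a + 1 - x) := by
    have h3 : ∑ x ∈ S, μ₀ x * (a + 1 - x)
        = (∑ x ∈ S, μ₀ x) - ∑ x ∈ S, μ₀ x * (x - a) := by
      rw [← Finset.sum_sub_distrib]; exact Finset.sum_congr rfl fun x _ => by ring
    rw [h3, ← hq]; linarith [hpq0]
  -- second moment difference
  have hD : moment 2 μ₁ - moment 2 μ₀ = ∑ x ∈ S, μ₀ x * ((x - a) * (a + 1 - x)) := by
    rw [hmom 2 μ₁ hT₁, hmom 2 μ₀ hT₀]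
    have l : ∀ (U : Finset ℝ), ∑ x ∈ U, (μ₁ x - μ₀ x) * x ^ 2
        = (∑ x ∈ U, μ₁ x * x ^ 2) - ∑ x ∈ U, μ₀ x * x ^ 2 := fun U => by
      rw [← Finset.sum_sub_distrib]; exact Finset.sum_congr rfl fun x _ => by ring
    have h4 : (∑ x ∈ T, μ₁ x * x ^ 2) - ∑ x ∈ T, μ₀ x * x ^ 2
        = (∑ x ∈ S, μ₁ x * x ^ 2) - ∑ x ∈ S, μ₀ x * x ^ 2 := by
      have h5 := hTd (fun x => x ^ 2)
      rw [hScd, add_zero] at h5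
      rw [l, l] at h5
      linarith [h5]
    rw [h4, hμ₁S (fun x => x ^ 2)]
    rw [hp, hq, Finset.sum_mul, Finset.sum_mul]
    rw [← Finset.sum_add_distrib, ← Finset.sum_sub_distrib]
    exact Finset.sum_congr rfl fun x _ => by ring
  -- spread difference
  have hsplit4 : ∀ f : ℝ → ℝ → ℝ, ∑ x ∈ T, ∑ y ∈ T, f x y
      = ((∑ x ∈ S, ∑ y ∈ S, f x y) + ∑ x ∈ S, ∑ y ∈ Sc, f x y)
        + ((∑ x ∈ Sc, ∑ y ∈ S, f x y) + ∑ x ∈ Sc, ∑ y ∈ Sc, f x y) := by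
    intro f
    rw [← Finset.sum_filter_add_sum_filter_not T (fun x => a ≤ x ∧ x ≤ a + 1)
      (fun x => ∑ y ∈ T, f x y)]
    congr 1 <;>
    · rw [← Finset.sum_add_distrib]
      exact Finset.sum_congr rfl fun x _ =>
        (Finset.sum_filter_add_sum_filter_not T _ (f x)).symm
  have hcancel : ∀ y ∈ Sc, ∑ x ∈ S, μ₁ x * μ₁ y * |x - y|
      = ∑ x ∈ S, μ₀ x * μ₀ y * |x - y| := by
    intro y hy
    have hyP := (Finset.mem_filter.mp hy).2
    have hyv : μ₁ y = μ₀ y := hScv y hy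
    rw [← sub_eq_zero, ← Finset.sum_sub_distrib]
    rcases not_and_or.mp hyP with h' | h'
    · push_neg at h'
      have hcalc : ∑ x ∈ S, (μ₁ x * μ₁ y * |x - y| - μ₀ x * μ₀ y * |x - y|)
          = (μ₀ y) * (∑ x ∈ S, (μ₁ x - μ₀ x) * x)
            - (μ₀ y * y) * ∑ x ∈ S, (μ₁ x - μ₀ x) := by
        rw [Finset.mul_sum, Finset.mul_sum, ← Finset.sum_sub_distrib]
        refine Finset.sum_congr rfl fun x hx => ?_
        have hxa := (Finset.mem_filter.mp hx).2.1
        rw [hyv, abs_of_nonneg (by linarith : (0:ℝ) ≤ x - y)]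
        ring
      rw [hcalc, hd0, hd1]; ring
    · push_neg at h'
      have hcalc : ∑ x ∈ S, (μ₁ x * μ₁ y * |x - y| - μ₀ x * μ₀ y * |x - y|)
          = (μ₀ y * y) * (∑ x ∈ S, (μ₁ x - μ₀ x))
            - (μ₀ y) * ∑ x ∈ S, (μ₁ x - μ₀ x) * x := by
        rw [Finset.mul_sum, Finset.mul_sum, ← Finset.sum_sub_distrib]
        refine Finset.sum_congr rfl fun x hx => ?_
        have hxa := (Finset.mem_filter.mp hx).2.2
        rw [hyv, abs_of_nonpos (by linarith : x - y ≤ 0)]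
        ring
      rw [hcalc, hd0, hd1]; ring
  have habs1 : |a - (a+1)| = 1 := by rw [abs_of_nonpos (by linarith)]; ring
  have habs2 : |a + 1 - a| = 1 := by rw [abs_of_nonneg (by linarith)]; ring
  have hSS1 : ∑ x ∈ S, ∑ y ∈ S, μ₁ x * μ₁ y * |x - y| = 2 * (μ₁ a * μ₁ (a+1)) := by
    have hinner : ∀ x, ∑ y ∈ S, μ₁ x * μ₁ y * |x - y|
        = μ₁ x * (μ₁ a * |x - a| + μ₁ (a+1) * |x - (a+1)|) := by
      intro x
      have := hμ₁S (fun y => μ₁ x * |x - y|)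
      rw [show ∑ y ∈ S, μ₁ x * μ₁ y * |x - y| = ∑ y ∈ S, μ₁ y * (μ₁ x * |x - y|) from
        Finset.sum_congr rfl fun y _ => by ring, this]
      ring
    rw [Finset.sum_congr rfl fun x _ => hinner x]
    have := hμ₁S (fun x => μ₁ a * |x - a| + μ₁ (a+1) * |x - (a+1)|)
    rw [show ∑ x ∈ S, μ₁ x * (μ₁ a * |x - a| + μ₁ (a+1) * |x - (a+1)|)
        = ∑ x ∈ S, μ₁ x * ((fun x => μ₁ a * |x - a| + μ₁ (a+1) * |x - (a+1)|) x) from rfl,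
      this]
    simp only [sub_self, abs_zero, habs1, habs2]
    ring
  have hspread_diff :
      (∑ x ∈ T, ∑ y ∈ T, μ₁ x * μ₁ y * |x - y|)
        - ∑ x ∈ T, ∑ y ∈ T, μ₀ x * μ₀ y * |x - y|
      = 2 * (μ₁ a * μ₁ (a+1)) - ∑ x ∈ S, ∑ y ∈ S, μ₀ x * μ₀ y * |x - y| := by
    rw [hsplit4 (fun x y => μ₁ x * μ₁ y * |x - y|),
        hsplit4 (fun x y => μ₀ x * μ₀ y * |x - y|)]
    have e1 : ∑ x ∈ S, ∑ y ∈ Sc, μ₁ x * μ₁ y * |x - y|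
        = ∑ x ∈ S, ∑ y ∈ Sc, μ₀ x * μ₀ y * |x - y| := by
      rw [Finset.sum_comm, Finset.sum_comm (s := S)]
      exact Finset.sum_congr rfl fun y hy => hcancel y hy
    have e2 : ∑ x ∈ Sc, ∑ y ∈ S, μ₁ x * μ₁ y * |x - y|
        = ∑ x ∈ Sc, ∑ y ∈ S, μ₀ x * μ₀ y * |x - y| := by
      refine Finset.sum_congr rfl fun x hx => ?_
      have l1 : ∀ (ν : ℝ →₀ ℝ), ∑ y ∈ S, ν x * ν y * |x - y|
          = ∑ y ∈ S, ν y * ν x * |y - x| :=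
        fun ν => Finset.sum_congr rfl fun y _ => by rw [abs_sub_comm]; ring
      rw [l1 μ₁, l1 μ₀, hcancel x hx]
    have e3 : ∑ x ∈ Sc, ∑ y ∈ Sc, μ₁ x * μ₁ y * |x - y|
        = ∑ x ∈ Sc, ∑ y ∈ Sc, μ₀ x * μ₀ y * |x - y| :=
      Finset.sum_congr rfl fun x hx => Finset.sum_congr rfl fun y hy => by
        rw [hScv x hx, hScv y hy]
    rw [e1, e2, e3, hSS1]
    ring
  -- final assembly
  rw [hspread μ₁ hT₁, hspread μ₀ hT₀, hD]
  have hfin := key_ineq a S (fun x hx => (Finset.mem_filter.mp hx).2)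
    (fun x => μ₀ x) (fun x _ => h₀.1 x)
  calc (1/2) * (∑ x ∈ T, ∑ y ∈ T, μ₁ x * μ₁ y * |x - y|)
        - (1/2) * ∑ x ∈ T, ∑ y ∈ T, μ₀ x * μ₀ y * |x - y|
      = μ₁ a * μ₁ (a+1) - (1/2) * ∑ x ∈ S, ∑ y ∈ S, μ₀ x * μ₀ y * |x - y| := by
        rw [← mul_sub, hspread_diff]; ring
    _ = (∑ x ∈ S, μ₀ x * (a + 1 - x)) * (∑ x ∈ S, μ₀ x * (x - a))
        - (1/2) * ∑ x ∈ S, ∑ y ∈ S, μ₀ x * μ₀ y * |x - y| := by rw [hp, hq]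
    _ ≥ 3 * (∑ x ∈ S, μ₀ x * ((x - a) * (a + 1 - x))) ^ 2 := hfin

end ExtremeMoveSpread
end

section
/- If V = ⟨v_1,…,v_ℓ⟩ is a sequence of moves that can be applied (in order) to a distribution μ, then M_2[Vμ] ≤ M_2[V̄μ], where V̄ is the corresponding sequence of extreme moves. -/


noncomputable def E' (ρ : ℝ →₀ ℝ) (f : ℝ → ℝ) : ℝ := ∑ x ∈ ρ.support, ρ x * f x

lemma E'_sum_subset {ρ : ℝ →₀ ℝ} {f : ℝ → ℝ} {s : Finset ℝ} (hs : ρ.support ⊆ s) :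
    E' ρ f = ∑ x ∈ s, ρ x * f x := by
  refine Finset.sum_subset hs ?_
  intro x _ hx
  simp [Finsupp.notMem_support_iff.mp hx]

lemma E'_add (ρ σ : ℝ →₀ ℝ) (f : ℝ → ℝ) : E' (ρ + σ) f = E' ρ f + E' σ f := by
  rw [E'_sum_subset (s := ρ.support ∪ σ.support) Finsupp.support_add,
      E'_sum_subset (s := ρ.support ∪ σ.support) Finset.subset_union_left,
      E'_sum_subset (s := ρ.support ∪ σ.support) Finset.subset_union_right,
      ← Finset.sum_add_distrib]
  exact Finset.sum_congr rfl (fun x _ => by simp [Finsupp.add_apply]; ring)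

lemma E'_sub (ρ σ : ℝ →₀ ℝ) (f : ℝ → ℝ) : E' (ρ - σ) f = E' ρ f - E' σ f := by
  have h := E'_add (ρ - σ) σ f
  rw [sub_add_cancel] at h
  linarith

lemma E'_mono {ρ : ℝ →₀ ℝ} {f g : ℝ → ℝ} (hρ : ∀ x, 0 ≤ ρ x) (hfg : ∀ x, f x ≤ g x) :
    E' ρ f ≤ E' ρ g :=
  Finset.sum_le_sum (fun x _ => mul_le_mul_of_nonneg_left (hfg x) (hρ x))

lemma E'_congr {ρ : ℝ →₀ ℝ} {f g : ℝ → ℝ} (h : ∀ x, ρ x ≠ 0 → f x = g x) :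
    E' ρ f = E' ρ g :=
  Finset.sum_congr rfl (fun x hx => by rw [h x (Finsupp.mem_support_iff.mp hx)])

lemma E'_affine (ρ : ℝ →₀ ℝ) (c0 c1 : ℝ) :
    E' ρ (fun x => c0 + c1 * x) = c0 * moment 0 ρ + c1 * moment 1 ρ := by
  unfold E' moment
  rw [Finset.mul_sum, Finset.mul_sum, ← Finset.sum_add_distrib]
  exact Finset.sum_congr rfl (fun x _ => by ring)

lemma chord_above {f : ℝ → ℝ} (hf : ConvexOn ℝ Set.univ f) (a : ℝ) {x : ℝ}
    (h1 : a ≤ x) (h2 : x ≤ a + 1) :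
    f x ≤ f a + (f (a + 1) - f a) * (x - a) := by
  have h := hf.2 (Set.mem_univ a) (Set.mem_univ (a + 1))
    (by linarith : (0:ℝ) ≤ a + 1 - x) (by linarith : (0:ℝ) ≤ x - a) (by ring)
  rw [smul_eq_mul, smul_eq_mul, smul_eq_mul, smul_eq_mul] at h
  have e : (a + 1 - x) * a + (x - a) * (a + 1) = x := by ring
  rw [e] at h
  nlinarith [h]

lemma chord_below {f : ℝ → ℝ} (hf : ConvexOn ℝ Set.univ f) (a : ℝ) {x : ℝ}
    (hx : x ∉ Set.Icc a (a + 1)) :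
    f a + (f (a + 1) - f a) * (x - a) ≤ f x := by
  rw [Set.mem_Icc, not_and_or, not_le, not_le] at hx
  rcases hx with hx | hx
  · -- x < a : a = (1/(a+1-x)) • x + ((a-x)/(a+1-x)) • (a+1)
    have hd : (0:ℝ) < a + 1 - x := by linarith
    have h := hf.2 (Set.mem_univ x) (Set.mem_univ (a + 1))
      (by positivity : (0:ℝ) ≤ 1 / (a + 1 - x))
      (by apply div_nonneg <;> linarith : (0:ℝ) ≤ (a - x) / (a + 1 - x))
      (by field_simp; ring)
    rw [smul_eq_mul, smul_eq_mul, smul_eq_mul, smul_eq_mul] at h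
    have e : 1 / (a + 1 - x) * x + (a - x) / (a + 1 - x) * (a + 1) = a := by
      field_simp; ring
    rw [e] at h
    have h2 := mul_le_mul_of_nonneg_left h hd.le
    have e2 : (a + 1 - x) * (1 / (a + 1 - x) * f x + (a - x) / (a + 1 - x) * f (a + 1))
        = f x + (a - x) * f (a + 1) := by field_simp; try ring
    rw [e2] at h2
    nlinarith [h2]
  · -- a + 1 < x
    have hd : (0:ℝ) < x - a := by linarith
    have h := hf.2 (Set.mem_univ a) (Set.mem_univ x)
      (by apply div_nonneg <;> linarith : (0:ℝ) ≤ (x - (a + 1)) / (x - a))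
      (by positivity : (0:ℝ) ≤ 1 / (x - a))
      (by field_simp; ring)
    rw [smul_eq_mul, smul_eq_mul, smul_eq_mul, smul_eq_mul] at h
    have e : (x - (a + 1)) / (x - a) * a + 1 / (x - a) * x = a + 1 := by
      field_simp; ring
    rw [e] at h
    have h2 := mul_le_mul_of_nonneg_left h hd.le
    have e2 : (x - a) * ((x - (a + 1)) / (x - a) * f a + 1 / (x - a) * f x)
        = (x - (a + 1)) * f a + f x := by field_simp; try ring
    rw [e2] at h2
    nlinarith [h2]

lemma affine_convexOn (c0 c1 : ℝ) : ConvexOn ℝ Set.univ (fun x : ℝ => c0 + c1 * x) := by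
  refine ⟨convex_univ, ?_⟩
  intro x _ y _ p q hp hq hpq
  simp only [smul_eq_mul]
  exact le_of_eq (by linear_combination (-c0) * hpq)

lemma max_convexOn {f g : ℝ → ℝ} (hf : ConvexOn ℝ Set.univ f) (hg : ConvexOn ℝ Set.univ g) :
    ConvexOn ℝ Set.univ (fun x => max (f x) (g x)) := by
  have := hf.sup hg
  simpa [Pi.sup_def] using this

/-- convex order -/
def cxLE' (μ ν : ℝ →₀ ℝ) : Prop :=
  ∀ f : ℝ → ℝ, ConvexOn ℝ Set.univ f → E' μ f ≤ E' ν f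

lemma cxLE'_step (a : ℝ) (δ μ ν ν' : ℝ →₀ ℝ)
    (hsupp : ∀ x, δ x ≠ 0 → a ≤ x ∧ x ≤ a + 1)
    (hm0 : moment 0 δ = 0) (hm1 : moment 1 δ = 0)
    (hpos : ∀ x, 0 ≤ (μ + δ) x)
    (hext : IsExtremeMoveOn a (a + 1) ν ν') (h : cxLE' μ ν) : cxLE' (μ + δ) ν' := by
  intro f hf
  set c1 : ℝ := f (a + 1) - f a with hc1
  set ℓf : ℝ → ℝ := fun x => (f a - c1 * a) + c1 * x with hℓf
  have hℓeq : ∀ x, ℓf x = f a + c1 * (x - a) := fun x => by simp [hℓf]; ring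
  set g : ℝ → ℝ := fun x => max (f x) (ℓf x) with hg
  have hgconv : ConvexOn ℝ Set.univ g := max_convexOn hf (affine_convexOn _ _)
  have hfg : ∀ x, f x ≤ g x := fun x => le_max_left _ _
  have hg_icc : ∀ x, a ≤ x → x ≤ a + 1 → g x = ℓf x := by
    intro x h1 h2
    have hfl : f x ≤ ℓf x := by rw [hℓeq x, hc1]; exact chord_above hf a h1 h2
    show max (f x) (ℓf x) = ℓf x
    exact max_eq_right hfl
  have hg_out : ∀ x, x ∉ Set.Icc a (a + 1) → g x = f x := by
    intro x hx
    have hfl : ℓf x ≤ f x := by rw [hℓeq x, hc1]; exact chord_below hf a hx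
    show max (f x) (ℓf x) = f x
    exact max_eq_left hfl
  have hga : g a = f a := by
    rw [hg_icc a le_rfl (by linarith), hℓeq]; ring
  have hgb : g (a + 1) = f (a + 1) := by
    rw [hg_icc (a+1) (by linarith) le_rfl, hℓeq, hc1]; ring
  -- Step 1 : E (μ+δ) f ≤ E (μ+δ) g
  have s1 : E' (μ + δ) f ≤ E' (μ + δ) g := E'_mono hpos hfg
  -- Step 2 : E (μ+δ) g = E μ g  since E δ g = E δ ℓ = 0
  have s2 : E' (μ + δ) g = E' μ g := by
    rw [E'_add]
    have : E' δ g = E' δ ℓf := E'_congr (fun x hx => hg_icc x (hsupp x hx).1 (hsupp x hx).2)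
    rw [this, hℓf, E'_affine, hm0, hm1]
    ring
  -- Step 3 : E μ g ≤ E ν g
  have s3 : E' μ g ≤ E' ν g := h g hgconv
  -- Step 4 : E ν g = E ν' g
  have s4 : E' ν g = E' ν' g := by
    have hd : E' (ν' - ν) g = E' (ν' - ν) ℓf := by
      refine E'_congr (fun x hx => ?_)
      have hmem : x ∈ Set.Icc a (a + 1) := by
        by_contra hmem
        exact hx (by rw [Finsupp.sub_apply, hext.1 x hmem, sub_self])
      exact hg_icc x hmem.1 hmem.2
    have hm0' : moment 0 (ν' - ν) = 0 := by
      have h0 : moment 0 (ν' - ν) = moment 0 ν' - moment 0 ν := E'_sub ν' ν (fun x => x ^ 0)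
      rw [h0, hext.2.2.1, sub_self]
    have hm1' : moment 1 (ν' - ν) = 0 := by
      have h0 : moment 1 (ν' - ν) = moment 1 ν' - moment 1 ν := E'_sub ν' ν (fun x => x ^ 1)
      rw [h0, hext.2.2.2, sub_self]
    have := E'_sub ν' ν g
    rw [hd, hℓf, E'_affine, hm0', hm1'] at this
    linarith
  -- Step 5 : E ν' g = E ν' f
  have s5 : E' ν' g = E' ν' f := by
    refine E'_congr (fun x hx => ?_)
    by_cases hmem : x ∈ Set.Icc a (a + 1)
    · rcases eq_or_lt_of_le hmem.1 with rfl | hax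
      · exact hga
      rcases eq_or_lt_of_le hmem.2 with rfl | hxb
      · exact hgb
      · exact absurd (hext.2.1 x ⟨hax, hxb⟩) hx
    · exact hg_out x hmem
  linarith

/-- **Corollary.** If `V = ⟨v 0, …, v (ℓ-1)⟩` is a sequence of moves that can be
applied in order to `μ 0`, generating `μ 0, …, μ ℓ`, and `ν 0, …, ν ℓ` is
generated from `ν 0 = μ 0` by the corresponding sequence of extreme moves, then
`M₂[Vμ] ≤ M₂[V̄μ]`, i.e. `M₂[μ ℓ] ≤ M₂[ν ℓ]`. -/
theorem moves_second_moment_extreme_seq (ℓ : ℕ) (v : ℕ → Move) (μ ν : ℕ → ℝ →₀ ℝ)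
    (hseq : IsMoveSeq ℓ v μ) (hν0 : ν 0 = μ 0)
    (hext : ∀ i < ℓ, IsExtremeMoveOn (v i).a ((v i).a + 1) (ν i) (ν (i + 1))) :
    moment 2 (μ ℓ) ≤ moment 2 (ν ℓ) := by
  have key : ∀ i, i ≤ ℓ → cxLE' (μ i) (ν i) := by
    intro i
    induction i with
    | zero => intro _; rw [hν0]; intro f _; exact le_rfl
    | succ n ih =>
      intro hn
      have hn' : n < ℓ := hn
      have h1 := hseq.2 n hn'
      rw [h1]
      exact cxLE'_step (v n).a (v n).δ (μ n) (ν n) (ν (n + 1)) (v n).supp_subset (v n).m0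
        (v n).m1 (by rw [← h1]; exact (hseq.1 (n + 1) hn).1) (hext n hn') (ih (le_of_lt hn'))
  have h2 : ConvexOn ℝ Set.univ (fun x : ℝ => x ^ 2) := Even.convexOn_pow (by norm_num)
  exact key ℓ le_rfl _ h2
end
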